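/- Let g(y) = e^{y−1} and F = 1 − 1/e. Then for all y ∈ [0,1], g is monotone with values in [0,1], and for every θ ∈ [0,1]: ∫_0^θ g(y) dy + (1 − g(θ)) ≥ F. -/
import Mathlib

/-- **Key analytic inequality for RANKING.** With `g(y) = e^{y−1}` and `F = 1 − 1/e`,
`g` is monotone on `[0,1]` with values in `[0,1]`, and for every `θ ∈ [0,1]`,
`∫_0^θ g(y) dy + (1 − g(θ)) ≥ F`. -/
theorem ranking_dual_feasibility_inequality :
    MonotoneOn (fun y : ℝ => Real.exp (y - 1)) (Set.Icc 0 1) ∧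
    (∀ y ∈ Set.Icc (0:ℝ) 1, Real.exp (y - 1) ∈ Set.Icc (0:ℝ) 1) ∧
    ∀ θ ∈ Set.Icc (0:ℝ) 1,
      1 - (Real.exp 1)⁻¹ ≤
        (∫ y in (0:ℝ)..θ, Real.exp (y - 1)) + (1 - Real.exp (θ - 1)) := by
  refine ⟨fun a _ b _ hab => Real.exp_le_exp.2 (by linarith), ?_, ?_⟩
  · rintro y ⟨h0, h1⟩
    exact ⟨(Real.exp_pos _).le, by
      have := Real.exp_le_one_iff.2 (by linarith : y - 1 ≤ 0); exact this⟩
  · rintro θ ⟨h0, h1⟩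
    have : (∫ y in (0:ℝ)..θ, Real.exp (y - 1)) = Real.exp (θ - 1) - Real.exp (0 - 1) := by
      have := intervalIntegral.integral_comp_sub_right (a := 0) (b := θ) (fun y => Real.exp y) 1
      rw [this, integral_exp]
    rw [this]
    have : Real.exp (0 - 1) = (Real.exp 1)⁻¹ := by
      rw [← Real.exp_neg]; norm_num
    rw [this]; linarith
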